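/- arXiv:2203.07227 — 3 statements merged into one kernel-verified Lean document; each statement's English description precedes it below -/
import Mathlib

section
/- The sum of the products of the decimal digits of the even numbers 2, 4, ..., 10^(k+1) equals (5/11)·(45^(k+1) - 1); equivalently, 11·a(5·10^k) = 5·(45^(k+1) - 1), where a(n) denotes the sum of products of digits of the first n even positive numbers. -/
/-- Product of the decimal digits of `p`. -/
def digProd (p : ℕ) : ℕ := (Nat.digits 10 p).prod

/-- Sum of products of digits of the first `n` even positive numbers. -/
def a (n : ℕ) : ℕ := ∑ j ∈ Finset.Icc 1 n, digProd (2 * j)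

lemma sum_range_mul (c B : ℕ) (f : ℕ → ℕ) :
    ∑ m ∈ Finset.range (c * B), f m
      = ∑ q ∈ Finset.range B, ∑ r ∈ Finset.range c, f (c * q + r) := by
  induction B with
  | zero => simp
  | succ B ih =>
      have : c * (B + 1) = c * B + c := by ring
      rw [this, Finset.sum_range_add, ih, Finset.sum_range_succ]

lemma digProd_step (q r : ℕ) (hr : r < 10) (h : 0 < 10 * q + r) :
    digProd (10 * q + r) = r * digProd q := by
  unfold digProd
  rw [Nat.digits_def' (by norm_num) h]
  have h1 : (10 * q + r) % 10 = r := by omega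
  have h2 : (10 * q + r) / 10 = q := by omega
  rw [h1, h2, List.prod_cons]

lemma digProd_small (r : ℕ) (h0 : 0 < r) (h : r < 10) : digProd r = r := by
  have := digProd_step 0 r h (by omega)
  simpa [digProd] using this

lemma digProd_inner_sum (q : ℕ) :
    ∑ r ∈ Finset.range 10, digProd (10 * q + r)
      = 45 * digProd q + (if q = 0 then 1 else 0) := by
  rcases Nat.eq_zero_or_pos q with hq | hq
  · subst hq
    have : ∀ r ∈ Finset.range 10, digProd (10 * 0 + r) = (if r = 0 then 1 else r) := by
      intro r hr
      rw [Finset.mem_range] at hr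
      rcases Nat.eq_zero_or_pos r with h0 | h0
      · subst h0; simp [digProd]
      · rw [if_neg h0.ne', Nat.mul_zero, Nat.zero_add, digProd_small r h0 hr]
    rw [Finset.sum_congr rfl this]
    simp [Finset.sum_range_succ, digProd]
  · have hq' : q ≠ 0 := hq.ne'
    rw [if_neg hq', Nat.add_zero,
      Finset.sum_congr rfl (fun r hr =>
        digProd_step q r (Finset.mem_range.mp hr) (by omega)),
      ← Finset.sum_mul]
    norm_num [Finset.sum_range_succ]

lemma Q_closed (n : ℕ) :
    44 * (∑ m ∈ Finset.range (10 ^ n), digProd m) + 1 = 45 ^ (n + 1) := by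
  induction n with
  | zero => simp [Finset.sum_range_one, digProd]
  | succ n ih =>
      have step : ∑ m ∈ Finset.range (10 ^ (n + 1)), digProd m
          = 45 * (∑ m ∈ Finset.range (10 ^ n), digProd m) + 1 := by
        have : (10 : ℕ) ^ (n + 1) = 10 * 10 ^ n := by ring
        rw [this, sum_range_mul, Finset.sum_congr rfl (fun q _ => digProd_inner_sum q),
          Finset.sum_add_distrib, ← Finset.mul_sum, Finset.sum_ite_eq'
            (Finset.range (10 ^ n)) 0 (fun _ => 1)]
        rw [if_pos (Finset.mem_range.mpr (pow_pos (by norm_num) n))]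
      rw [step]
      have : 45 ^ (n + 1 + 1) = 45 * 45 ^ (n + 1) := by ring
      rw [this, ← ih]
      ring

lemma a_eq (k : ℕ) : a (5 * 10 ^ k) = 20 * ∑ m ∈ Finset.range (10 ^ k), digProd m := by
  unfold a
  have h1 : Finset.Icc 1 (5 * 10 ^ k) = Finset.Ico 1 (5 * 10 ^ k + 1) := by
    rw [Finset.Ico_add_one_right_eq_Icc]
  rw [h1, Finset.sum_Ico_eq_sum_range]
  have h2 : 5 * 10 ^ k + 1 - 1 = 5 * 10 ^ k := by omega
  rw [h2, sum_range_mul 5 (10 ^ k) (fun t => digProd (2 * (1 + t)))]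
  rw [Finset.mul_sum]
  apply Finset.sum_congr rfl
  intro q _
  have e0 : digProd (2 * (1 + (5 * q + 0))) = 2 * digProd q := by
    have h : 2 * (1 + (5 * q + 0)) = 10 * q + 2 := by ring
    rw [h, digProd_step q 2 (by norm_num) (by omega)]
  have e1 : digProd (2 * (1 + (5 * q + 1))) = 4 * digProd q := by
    have h : 2 * (1 + (5 * q + 1)) = 10 * q + 4 := by ring
    rw [h, digProd_step q 4 (by norm_num) (by omega)]
  have e2 : digProd (2 * (1 + (5 * q + 2))) = 6 * digProd q := by
    have h : 2 * (1 + (5 * q + 2)) = 10 * q + 6 := by ring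
    rw [h, digProd_step q 6 (by norm_num) (by omega)]
  have e3 : digProd (2 * (1 + (5 * q + 3))) = 8 * digProd q := by
    have h : 2 * (1 + (5 * q + 3)) = 10 * q + 8 := by ring
    rw [h, digProd_step q 8 (by norm_num) (by omega)]
  have e4 : digProd (2 * (1 + (5 * q + 4))) = 0 := by
    have h : 2 * (1 + (5 * q + 4)) = 10 * (q + 1) + 0 := by ring
    rw [h, digProd_step (q + 1) 0 (by norm_num) (by omega)]
    exact Nat.zero_mul _
  rw [show (5 : ℕ) = 4 + 1 from rfl, Finset.sum_range_succ,
    Finset.sum_range_succ, Finset.sum_range_succ, Finset.sum_range_succ,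
    Finset.sum_range_one, e0, e1, e2, e3, e4]
  ring

/-- `11 * a (5 * 10^k) = 5 * (45^(k+1) - 1)`, i.e. the sum of digit products of the
even numbers `2, 4, ..., 10^(k+1)` equals `(5/11)(45^(k+1) - 1)`. -/
theorem stmt2 (k : ℕ) : 11 * a (5 * 10 ^ k) = 5 * (45 ^ (k + 1) - 1) := by
  rw [a_eq]
  have h := Q_closed k
  omega
end

section
/- For every natural number n ≥ 1, a(n) ≤ (5/11)·(45^{log₁₀((n+1)/5)+1} - 1), where a(n) is the sum of products of decimal digits of the first n even numbers; equality holds if and only if n = 5·10^k - 1 for some k ≥ 0. -/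
set_option maxHeartbeats 1000000


def B (m : ℕ) : ℕ := ∑ q ∈ Finset.range m, digProd q

lemma digProd_zero : digProd 0 = 1 := by simp [digProd]

lemma digProd_step_s6 (n : ℕ) (hn : 0 < n) : digProd n = (n % 10) * digProd (n / 10) := by
  unfold digProd
  rw [Nat.digits_def' (by norm_num : 1 < 10) hn, List.prod_cons]

lemma digProd_mul_add (m r : ℕ) (hr : r < 10) (h : 0 < 10 * m + r) :
    digProd (10 * m + r) = r * digProd m := by
  rw [digProd_step_s6 _ h]
  congr 2 <;> omega

lemma digProd_small_s6 (k : ℕ) (h1 : 0 < k) (h2 : k < 10) : digProd k = k := by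
  have := digProd_mul_add 0 k h2 (by omega)
  simpa [digProd_zero] using this

lemma B_succ (m : ℕ) : B (m + 1) = B m + digProd m := Finset.sum_range_succ _ m

-- B (10*(m+1)) = B(10*m) + 45 * digProd m  for m ≥ 0?? careful m=0: B 10 = B 0 + ∑_{i<10} digProd i = 46 ≠ 0+45.
lemma B_block (m : ℕ) (hm : 1 ≤ m) : B (10 * m + 10) = B (10 * m) + 45 * digProd m := by
  have e : ∀ i, i < 10 → digProd (10 * m + i) = i * digProd m := fun i hi =>
    digProd_mul_add m i hi (by omega)
  have : B (10 * m + 10) = B (10*m) + ∑ i ∈ Finset.range 10, digProd (10 * m + i) := by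
    rw [B, B, ← Finset.sum_range_add]  -- maybe wrong name
  rw [this]
  congr 1
  rw [Finset.sum_congr rfl (fun i hi => e i (Finset.mem_range.mp hi))]
  simp [Finset.sum_range_succ, Finset.mul_sum]
  ring

lemma B_ten : ∀ m : ℕ, 1 ≤ m → B (10 * m) = 1 + 45 * B m := by
  intro m hm
  induction m with
  | zero => omega
  | succ m ih =>
    rcases Nat.eq_or_lt_of_le hm with h | h
    · -- m + 1 = 1
      have : m = 0 := by omega
      subst this
      have h10 : B 10 = 46 := by
        have h : ∀ k, 0 < k → k < 10 → digProd k = k := digProd_small_s6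
        simp [B, Finset.sum_range_succ, digProd_zero, h 1, h 2, h 3, h 4, h 5, h 6, h 7, h 8, h 9]
      have h1 : B 1 = 1 := by simp [B, Finset.sum_range_succ, digProd_zero]
      rw [show 10 * 1 = 10 by norm_num, h10, h1]
    · have hm1 : 1 ≤ m := by omega
      have := B_block m hm1
      rw [show 10 * (m+1) = 10 * m + 10 by ring, this, ih hm1, B_succ]
      ring

lemma B_formula (m s : ℕ) (hm : 1 ≤ m) (hs : s ≤ 9) :
    B (10 * m + s) = 1 + 45 * B m + (s * (s-1) / 2) * digProd m := by
  induction s with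
  | zero => simpa using B_ten m hm
  | succ s ih =>
    have hs' : s ≤ 9 := by omega
    rw [show 10 * m + (s+1) = (10 * m + s) + 1 by ring, B_succ, ih hs',
      digProd_mul_add m s (by omega) (by omega)]
    have : (s+1) * (s+1-1) / 2 = s * (s-1) / 2 + s := by
      rcases s with _ | s
      · simp
      · have hAB : (s+1+1)*(s+1+1-1) = (s+1)*(s+1-1) + 2*(s+1) := by simp; ring
        have he1 : 2 * ((s+1)*(s+1-1)/2) = (s+1)*(s+1-1) := by
          refine Nat.two_mul_div_two_of_even ?_
          simp only [Nat.add_sub_cancel]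
          simpa [Nat.mul_comm] using Nat.even_mul_succ_self s
        have he2 : 2 * ((s+1+1)*(s+1+1-1)/2) = (s+1+1)*(s+1+1-1) := by
          refine Nat.two_mul_div_two_of_even ?_
          simp only [Nat.add_sub_cancel]
          simpa [Nat.mul_comm] using Nat.even_mul_succ_self (s+1)
        omega
    rw [this]
    ring

lemma a_succ (n : ℕ) : a (n + 1) = a n + digProd (2 * (n + 1)) := by
  unfold a
  rw [Finset.sum_Icc_succ_top (by omega : 1 ≤ n + 1)]

lemma a_five : ∀ m : ℕ, a (5 * m) = 20 * B m := by
  intro m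
  induction m with
  | zero => simp [a, B]
  | succ m ih =>
    have e : ∀ i, 1 ≤ i → i ≤ 5 → digProd (2 * (5 * m + i)) = (2*i % 10) * digProd (m + (2*i)/10) := by
      intro i h1 h2
      have : 2 * (5 * m + i) = 10 * (m + (2*i)/10) + (2*i % 10) := by omega
      rw [this, digProd_mul_add _ _ (by omega) (by omega)]
    have h1 := e 1 (by omega) (by omega)
    have h2 := e 2 (by omega) (by omega)
    have h3 := e 3 (by omega) (by omega)
    have h4 := e 4 (by omega) (by omega)
    have h5 := e 5 (by omega) (by omega)
    norm_num at h1 h2 h3 h4 h5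
    rw [show 5 * (m+1) = (5*m+4)+1 by ring, a_succ,
        show 5*m+4 = (5*m+3)+1 by ring, a_succ,
        show 5*m+3 = (5*m+2)+1 by ring, a_succ,
        show 5*m+2 = (5*m+1)+1 by ring, a_succ,
        show 5*m+1 = (5*m)+1 by ring, a_succ, ih]
    rw [show 5*m+0+1 = 5*m+1 by ring, show 5*m+1+1 = 5*m+2 by ring,
        show 5*m+2+1 = 5*m+3 by ring, show 5*m+3+1 = 5*m+4 by ring,
        show 5*m+4+1 = 5*m+5 by ring] at *
    rw [h1, h2, h3, h4, h5, B_succ]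
    ring

lemma a_formula : ∀ t, t ≤ 4 → ∀ m, a (5 * m + t) = 20 * B m + (t * (t+1)) * digProd m := by
  intro t
  induction t with
  | zero => intro _ m; simpa using a_five m
  | succ t ih =>
    intro ht m
    have e : digProd (2 * (5 * m + (t+1))) = 2 * (t+1) * digProd m := by
      have h2 : 2 * (5 * m + (t+1)) = 10 * m + 2*(t+1) := by ring
      rw [h2, digProd_mul_add _ _ (by omega) (by omega)]
    rw [show 5*m+(t+1) = (5*m+t)+1 by ring, a_succ,
        show (5*m+t)+1 = 5*m+(t+1) by ring, e, ih (by omega) m]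
    ring

lemma B_zero : B 0 = 0 := by simp [B]

lemma B_vals : B 1 = 1 ∧ B 2 = 2 ∧ B 3 = 4 ∧ B 4 = 7 ∧ B 5 = 11 ∧ B 6 = 16 ∧ B 7 = 22 ∧ B 8 = 29 ∧ B 9 = 37 ∧ B 10 = 46 := by
  have h : ∀ k, 0 < k → k < 10 → digProd k = k := digProd_small_s6
  refine ⟨?_,?_,?_,?_,?_,?_,?_,?_,?_,?_⟩ <;>
    simp [B, Finset.sum_range_succ, digProd_zero, h 1, h 2, h 3, h 4, h 5, h 6, h 7, h 8, h 9]

lemma B_one : B 1 = 1 := B_vals.1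


noncomputable def cc : ℝ := Real.logb 10 45

lemma ten_rpow_cc : (10:ℝ) ^ cc = 45 :=
  Real.rpow_logb (by norm_num) (by norm_num) (by norm_num)

lemma cc_ge : (3/2 : ℝ) ≤ cc := by
  rw [cc, Real.le_logb_iff_rpow_le (by norm_num) (by norm_num)]
  have h : ((10:ℝ) ^ ((3:ℝ)/2)) ^ (2:ℕ) ≤ (45:ℝ) ^ (2:ℕ) := by
    rw [← Real.rpow_natCast ((10:ℝ) ^ ((3:ℝ)/2)) 2, ← Real.rpow_mul (by norm_num)]
    norm_num
  have h10 : (0:ℝ) ≤ (10:ℝ) ^ ((3:ℝ)/2) := (Real.rpow_pos_of_pos (by norm_num) _).le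
  exact le_of_pow_le_pow_left₀ (by norm_num) (by norm_num) h

lemma cc_le : cc ≤ (17/10 : ℝ) := by
  rw [cc, Real.logb_le_iff_le_rpow (by norm_num) (by norm_num)]
  have h : (45:ℝ) ^ (10:ℕ) ≤ ((10:ℝ) ^ ((17:ℝ)/10)) ^ (10:ℕ) := by
    rw [← Real.rpow_natCast ((10:ℝ) ^ ((17:ℝ)/10)) 10, ← Real.rpow_mul (by norm_num)]
    norm_num
  exact le_of_pow_le_pow_left₀ (by norm_num) (Real.rpow_pos_of_pos (by norm_num) _).le h
lemma bern (y : ℝ) (hy : -1 ≤ y) : 1 + cc * y ≤ (1 + y) ^ cc :=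
  one_add_mul_self_le_rpow_one_add hy (by nlinarith [cc_ge])

lemma sq_bound (x : ℝ) (h0 : 0 < x) (h1 : x ≤ 10) : 45 * (x/100) * x ≤ x ^ cc := by
  have hx : x = 10 * (x/10) := by ring
  have h2 : x ^ cc = 45 * (x/10) ^ cc := by
    rw [hx, Real.mul_rpow (by norm_num) (by positivity), ten_rpow_cc]
    ring_nf
  have h3 : (x/10) ^ (2:ℝ) ≤ (x/10) ^ cc :=
    Real.rpow_le_rpow_of_exponent_ge (by positivity) (by linarith) (by nlinarith [cc_le])
  have h4 : (x/10) ^ (2:ℝ) = (x/10)*(x/10) := by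
    rw [show (2:ℝ) = ((2:ℕ):ℝ) by norm_num, Real.rpow_natCast]
    ring
  rw [h2]
  nlinarith [h3, h4]

lemma keyG : ∀ m : ℕ, 1 ≤ m → ∀ δ : ℝ, 0 < δ → δ ≤ 1 →
    (44 * (B m : ℝ) + 1 + 44 * δ * (digProd m : ℝ)) ≤ 45 * ((m : ℝ) + δ) ^ cc ∧
    (44 * (B m : ℝ) + 1 + 44 * δ * (digProd m : ℝ) = 45 * ((m : ℝ) + δ) ^ cc →
      δ = 1 ∧ ∃ k : ℕ, m + 1 = 10 ^ k) := by
  intro m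
  induction m using Nat.strong_induction_on with
  | _ m ih =>
  intro hm δ hδ0 hδ1
  obtain ⟨b1,b2,b3,b4,b5,b6,b7,b8,b9,b10⟩ := B_vals
  by_cases h10 : m ≤ 9
  · -- base cases
    have hd : digProd m = m := digProd_small_s6 m hm (by omega)
    interval_cases m
    · -- m = 1 : 45 + 44δ ≤ 45(1+δ)^cc
      have hb := bern δ (by linarith)
      constructor
      · rw [b1, hd]; push_cast; nlinarith [cc_ge]
      · intro he; exfalso; rw [b1, hd] at he; push_cast at he; nlinarith [cc_ge]
    · have hb := bern (1+δ) (by linarith)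
      have h2 : ((2:ℕ):ℝ) + δ = 1 + (1+δ) := by push_cast; ring
      constructor
      · rw [b2, hd, h2]; push_cast; nlinarith [cc_ge]
      · intro he; exfalso; rw [b2, hd, h2] at he; push_cast at he; nlinarith [cc_ge]
    · have hb := sq_bound (3+δ) (by linarith) (by linarith)
      constructor
      · rw [b3, hd]; push_cast; nlinarith
      · intro he; exfalso; rw [b3, hd] at he; push_cast at he; nlinarith
    · have hb := sq_bound (4+δ) (by linarith) (by linarith)
      constructor
      · rw [b4, hd]; push_cast; nlinarith
      · intro he; exfalso; rw [b4, hd] at he; push_cast at he; nlinarith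
    · have hb := sq_bound (5+δ) (by linarith) (by linarith)
      constructor
      · rw [b5, hd]; push_cast; nlinarith
      · intro he; exfalso; rw [b5, hd] at he; push_cast at he; nlinarith
    · have hb := sq_bound (6+δ) (by linarith) (by linarith)
      constructor
      · rw [b6, hd]; push_cast; nlinarith
      · intro he; exfalso; rw [b6, hd] at he; push_cast at he; nlinarith
    · have hb := sq_bound (7+δ) (by linarith) (by linarith)
      constructor
      · rw [b7, hd]; push_cast; nlinarith
      · intro he; exfalso; rw [b7, hd] at he; push_cast at he; nlinarith
    · have hb := sq_bound (8+δ) (by linarith) (by linarith)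
      constructor
      · rw [b8, hd]; push_cast; nlinarith
      · intro he; exfalso; rw [b8, hd] at he; push_cast at he; nlinarith
    · -- m = 9
      have hb := bern ((δ-1)/10) (by linarith)
      have h9 : ((9:ℕ):ℝ) + δ = 10 * (1 + (δ-1)/10) := by push_cast; ring
      have hr : (((9:ℕ):ℝ) + δ) ^ cc = 45 * (1 + (δ-1)/10) ^ cc := by
        rw [h9, Real.mul_rpow (by norm_num) (by nlinarith), ten_rpow_cc]
      constructor
      · rw [b9, hd, hr]; push_cast; nlinarith [cc_le]
      · intro he
        rw [b9, hd, hr] at he; push_cast at he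
        have hδ : δ = 1 := by nlinarith [cc_le]
        exact ⟨hδ, 1, by norm_num⟩
  · -- step case
    push_neg at h10
    set s := m % 10 with hs_def
    set m' := m / 10 with hm'_def
    have hsm : m = 10 * m' + s := by omega
    have hm'1 : 1 ≤ m' := by omega
    have hs9 : s ≤ 9 := by omega
    have hB : B m = 1 + 45 * B m' + (s * (s-1) / 2) * digProd m' := by
      rw [hsm] at *; exact B_formula m' s hm'1 hs9
    have hP : digProd m = s * digProd m' := by
      rw [hsm]; exact digProd_mul_add m' s (by omega) (by omega)
    have hw : 2 * (s * (s-1) / 2) = s * (s-1) := by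
      rcases Nat.eq_zero_or_pos s with h | h
      · simp [h]
      · refine Nat.two_mul_div_two_of_even ?_
        have := Nat.even_mul_succ_self (s-1)
        have h1 : (s-1) + 1 = s := by omega
        rw [h1] at this
        rwa [Nat.mul_comm] at this
    set δ' : ℝ := ((s:ℝ) + δ)/10 with hδ'_def
    have hδ'0 : 0 < δ' := by positivity
    have hδ'1 : δ' ≤ 1 := by
      have : (s:ℝ) ≤ 9 := by exact_mod_cast hs9
      rw [hδ'_def]; linarith
    obtain ⟨IH1, IH2⟩ := ih m' (by omega) hm'1 δ' hδ'0 hδ'1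
    have hxy : ((m:ℝ) + δ) = 10 * ((m':ℝ) + δ') := by
      rw [hδ'_def]
      have : (m:ℝ) = 10 * (m':ℝ) + (s:ℝ) := by exact_mod_cast congrArg (Nat.cast : ℕ → ℝ) hsm
      rw [this]; ring
    have hrw : ((m:ℝ) + δ) ^ cc = 45 * (((m':ℝ) + δ') ^ cc) := by
      rw [hxy, Real.mul_rpow (by norm_num) (by positivity), ten_rpow_cc]
    have hwR : (44:ℝ) * ((s * (s-1) / 2 : ℕ):ℝ) = 22 * (s:ℝ) * ((s:ℝ) - 1) := by
      have h2 : ((2 * (s * (s-1) / 2) : ℕ):ℝ) = ((s * (s-1) : ℕ):ℝ) := by exact_mod_cast congrArg (Nat.cast : ℕ → ℝ) hw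
      push_cast at h2
      have hs1 : (1:ℝ) ≤ (s:ℝ) ∨ s = 0 := by
        rcases Nat.eq_zero_or_pos s with h | h
        · right; exact h
        · left; exact_mod_cast h
      rcases hs1 with h | h
      · have : ((s:ℝ) - 1) = (((s-1 : ℕ)):ℝ) := by
          have : 1 ≤ s := by exact_mod_cast h
          push_cast [this]; ring
        rw [this] at *
        linarith [h2]
      · simp [h]
    have hLHS : 44 * (B m : ℝ) + 1 + 44 * δ * (digProd m : ℝ)
        = 45 * (44 * (B m' : ℝ) + 1) + (22*(s:ℝ)*((s:ℝ)-1) + 44*(s:ℝ)*δ) * (digProd m' : ℝ) := by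
      rw [hB, hP]
      push_cast
      nlinarith [hwR]
    have hcoef : 22*(s:ℝ)*((s:ℝ)-1) + 44*(s:ℝ)*δ ≤ 198 * ((s:ℝ) + δ) := by
      have hs9' : (s:ℝ) ≤ 9 := by exact_mod_cast hs9
      have hs0' : (0:ℝ) ≤ (s:ℝ) := by positivity
      nlinarith [mul_nonneg (mul_nonneg hs0' (sub_nonneg.2 hs9')) (le_refl (0:ℝ)),
        mul_nonneg (sub_nonneg.2 hs9') (sub_nonneg.2 hδ1),
        mul_nonneg (sub_nonneg.2 hs9') hδ0.le,
        mul_nonneg hs0' (sub_nonneg.2 hδ1),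
        mul_nonneg hs0' (sub_nonneg.2 hs9')]
    have hPnn : (0:ℝ) ≤ (digProd m' : ℝ) := by positivity
    have hmid : 45 * (44 * (B m' : ℝ) + 1) + 198*((s:ℝ)+δ) * (digProd m' : ℝ)
        = 45 * (44 * (B m' : ℝ) + 1 + 44 * δ' * (digProd m' : ℝ)) := by
      rw [hδ'_def]; ring
    have chain1 : 44 * (B m : ℝ) + 1 + 44 * δ * (digProd m : ℝ)
        ≤ 45 * (44 * (B m' : ℝ) + 1 + 44 * δ' * (digProd m' : ℝ)) := by
      rw [hLHS, ← hmid]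
      have := mul_le_mul_of_nonneg_right hcoef hPnn
      linarith
    have chain2 : 45 * (44 * (B m' : ℝ) + 1 + 44 * δ' * (digProd m' : ℝ))
        ≤ 45 * ((m:ℝ) + δ) ^ cc := by
      rw [hrw]; linarith
    constructor
    · linarith
    · intro he
      have heq : 44 * (B m' : ℝ) + 1 + 44 * δ' * (digProd m' : ℝ) = 45 * (((m':ℝ) + δ') ^ cc) := by
        have h1 : 45 * (44 * (B m' : ℝ) + 1 + 44 * δ' * (digProd m' : ℝ)) = 45 * ((m:ℝ) + δ) ^ cc := le_antisymm chain2 (he ▸ chain1)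
        rw [hrw] at h1
        linarith
      obtain ⟨hδ'eq, k, hk⟩ := IH2 heq
      have hsδ : (s:ℝ) + δ = 10 := by
        rw [hδ'_def] at hδ'eq
        linarith
      have hs9'' : s = 9 := by
        by_contra hne
        have : s ≤ 8 := by omega
        have : (s:ℝ) ≤ 8 := by exact_mod_cast this
        linarith
      have hδeq : δ = 1 := by
        rw [hs9''] at hsδ
        push_cast at hsδ
        linarith
      refine ⟨hδeq, k+1, ?_⟩
      rw [hsm, hs9'']
      have : m' + 1 = 10 ^ k := hk
      have h2 : 10 * m' + 9 + 1 = 10 * (m' + 1) := by ring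
      rw [h2, this]
      ring
lemma Beq : ∀ k : ℕ, 44 * B (10 ^ k) + 1 = 45 ^ (k+1) := by
  intro k
  induction k with
  | zero => simp [B_one]
  | succ k ih =>
    have h1 : (10:ℕ) ^ (k+1) = 10 * 10 ^ k + 0 := by ring
    have h2 : B (10 ^ (k+1)) = 1 + 45 * B (10 ^ k) := by
      rw [h1, B_formula (10^k) 0 (Nat.one_le_pow _ _ (by norm_num)) (by norm_num)]
      simp
    rw [h2]
    have : 44 * (1 + 45 * B (10^k)) + 1 = 45 * (44 * B (10^k) + 1) := by ring
    rw [this, ih]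
    ring

-- rpow of 10^k
lemma pow_ten_rpow (k : ℕ) : (((10:ℕ) ^ k : ℕ) : ℝ) ^ cc = 45 ^ k := by
  have h1 : (((10:ℕ) ^ k : ℕ) : ℝ) = (10:ℝ) ^ ((k:ℕ):ℝ) := by
    push_cast
    rw [Real.rpow_natCast]
  rw [h1, ← Real.rpow_mul (by norm_num : (0:ℝ) ≤ 10), mul_comm,
    Real.rpow_mul (by norm_num : (0:ℝ) ≤ 10), ten_rpow_cc, Real.rpow_natCast]


lemma sq_bound1 (y : ℝ) (h0 : 0 < y) (h1 : y ≤ 1) : y * y ≤ y ^ cc := by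
  have h3 : y ^ (2:ℝ) ≤ y ^ cc :=
    Real.rpow_le_rpow_of_exponent_ge h0 h1 (by nlinarith [cc_le])
  have h4 : y ^ (2:ℝ) = y * y := by
    rw [show (2:ℝ) = ((2:ℕ):ℝ) by norm_num, Real.rpow_natCast]; ring
  calc y * y = y ^ (2:ℝ) := h4.symm
  _ ≤ y ^ cc := h3

lemma core (m t : ℕ) (ht : t ≤ 4) (h : 1 ≤ 5*m + t) :
    (11 * (a (5*m+t) : ℝ) + 5 ≤ 225 * ((m:ℝ) + ((t:ℝ)+1)/5) ^ cc) ∧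
    (11 * (a (5*m+t) : ℝ) + 5 = 225 * ((m:ℝ) + ((t:ℝ)+1)/5) ^ cc ↔ (t = 4 ∧ ∃ k : ℕ, m + 1 = 10 ^ k)) := by
  have haf := a_formula t ht m
  have haR : (a (5*m+t) : ℝ) = 20 * (B m : ℝ) + (t*(t+1) : ℕ) * (digProd m : ℝ) := by
    rw [haf]; push_cast; ring
  rcases Nat.eq_zero_or_pos m with hm0 | hm1
  · -- m = 0 : t ∈ 1..4
    subst hm0
    have ht1 : 1 ≤ t := by omega
    have haR0 : (a (5*0+t) : ℝ) = (t:ℝ)*((t:ℝ)+1) := by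
      rw [haR, B_zero, digProd_zero]; push_cast; ring
    interval_cases t
    · have hb := sq_bound1 (2/5) (by norm_num) (by norm_num)
      constructor
      · rw [haR0]; push_cast
        nlinarith
      · constructor
        · intro he; exfalso; rw [haR0] at he; push_cast at he; nlinarith
        · rintro ⟨h4, _⟩; omega
    · have hb := sq_bound1 (3/5) (by norm_num) (by norm_num)
      constructor
      · rw [haR0]; push_cast; nlinarith
      · constructor
        · intro he; exfalso; rw [haR0] at he; push_cast at he; nlinarith
        · rintro ⟨h4, _⟩; omega
    · have hb := sq_bound1 (4/5) (by norm_num) (by norm_num)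
      constructor
      · rw [haR0]; push_cast; nlinarith
      · constructor
        · intro he; exfalso; rw [haR0] at he; push_cast at he; nlinarith
        · rintro ⟨h4, _⟩; omega
    · have h1 : ((0:ℕ):ℝ) + (((4:ℕ):ℝ)+1)/5 = 1 := by norm_num
      have he : 11 * (a (5*0+4) : ℝ) + 5 = 225 * (((0:ℕ):ℝ) + (((4:ℕ):ℝ)+1)/5) ^ cc := by
        rw [haR0]
        push_cast
        norm_num
        try rw [Real.one_rpow]
        try norm_num
      exact ⟨he.le, by
        constructor
        · intro _; exact ⟨rfl, 0, by norm_num⟩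
        · intro _; exact he⟩
  · -- m ≥ 1
    rcases Nat.lt_or_ge t 4 with ht4 | ht4
    · -- t ≤ 3
      rcases Nat.eq_zero_or_pos t with ht0 | ht1
      · -- t = 0
        subst ht0
        obtain ⟨K1, K2⟩ := keyG m hm1 (1/5) (by norm_num) (by norm_num)
        have hP : (0:ℝ) ≤ (digProd m : ℝ) := by positivity
        have hlhs : 11 * (a (5*m+0) : ℝ) + 5 ≤ 5 * (44 * (B m : ℝ) + 1 + 44 * (1/5:ℝ) * (digProd m : ℝ)) := by
          rw [haR]; push_cast; nlinarith
        have hx0 : ((m:ℝ) + (((0:ℕ):ℝ)+1)/5) = (m:ℝ) + 1/5 := by push_cast; norm_num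
        have hle : 11 * (a (5*m+0) : ℝ) + 5 ≤ 225 * ((m:ℝ) + (((0:ℕ):ℝ)+1)/5) ^ cc := by
          rw [hx0]; nlinarith
        refine ⟨hle, ?_, ?_⟩
        · intro he
          exfalso
          have heq : 44 * (B m : ℝ) + 1 + 44 * (1/5:ℝ) * (digProd m : ℝ) = 45 * ((m:ℝ) + 1/5) ^ cc := by
            rw [hx0] at he
            nlinarith
          have := (K2 heq).1
          norm_num at this
        · rintro ⟨h4, _⟩; omega
      · -- 1 ≤ t ≤ 3
        set δ : ℝ := ((t:ℝ)*((t:ℝ)+1))/20 with hδdef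
        have htR1 : (1:ℝ) ≤ (t:ℝ) := by exact_mod_cast ht1
        have htR3 : (t:ℝ) ≤ 3 := by exact_mod_cast (by omega : t ≤ 3)
        have hδ0 : 0 < δ := by rw [hδdef]; positivity
        have hδ1 : δ ≤ 1 := by rw [hδdef]; nlinarith
        have hδlt : δ < ((t:ℝ)+1)/5 := by
          rw [hδdef, div_lt_div_iff₀ (by norm_num) (by norm_num)]
          nlinarith
        obtain ⟨K1, _⟩ := keyG m hm1 δ hδ0 hδ1
        have hmono : ((m:ℝ) + δ) ^ cc < ((m:ℝ) + ((t:ℝ)+1)/5) ^ cc := by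
          apply Real.rpow_lt_rpow (by positivity) (by linarith) (by linarith [cc_ge])
        have hlhs : 11 * (a (5*m+t) : ℝ) + 5 = 5 * (44 * (B m : ℝ) + 1 + 44 * δ * (digProd m : ℝ)) := by
          rw [haR, hδdef]; push_cast; ring
        have hstrict : 11 * (a (5*m+t) : ℝ) + 5 < 225 * ((m:ℝ) + ((t:ℝ)+1)/5) ^ cc := by
          rw [hlhs]
          calc 5 * (44 * (B m : ℝ) + 1 + 44 * δ * (digProd m : ℝ))
              ≤ 5 * (45 * ((m:ℝ) + δ) ^ cc) := by linarith
          _ < 225 * ((m:ℝ) + ((t:ℝ)+1)/5) ^ cc := by nlinarith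
        refine ⟨hstrict.le, ?_, ?_⟩
        · intro he; exfalso; rw [he] at hstrict; exact lt_irrefl _ hstrict
        · rintro ⟨h4, _⟩; omega
    · -- t = 4
      have ht4' : t = 4 := by omega
      subst ht4'
      have h15 : ((m:ℝ) + (((4:ℕ):ℝ)+1)/5) = (m:ℝ) + 1 := by push_cast; norm_num
      have hlhs : 11 * (a (5*m+4) : ℝ) + 5 = 5 * (44 * (B m : ℝ) + 1 + 44 * (1:ℝ) * (digProd m : ℝ)) := by
        rw [haR]; push_cast; ring
      obtain ⟨K1, K2⟩ := keyG m hm1 1 (by norm_num) (by norm_num)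
      constructor
      · rw [hlhs]
        calc 5 * (44 * (B m : ℝ) + 1 + 44 * (1:ℝ) * (digProd m : ℝ))
            ≤ 5 * (45 * ((m:ℝ) + 1) ^ cc) := by linarith
        _ = 225 * ((m:ℝ) + (((4:ℕ):ℝ)+1)/5) ^ cc := by
            rw [h15]; ring
      · constructor
        · intro he
          refine ⟨rfl, ?_⟩
          have heq : 44 * (B m : ℝ) + 1 + 44 * (1:ℝ) * (digProd m : ℝ) = 45 * ((m:ℝ) + 1) ^ cc := by
            rw [hlhs] at he
            have h2 : 225 * ((m:ℝ) + (((4:ℕ):ℝ)+1)/5) ^ cc = 5 * (45 * ((m:ℝ) + 1) ^ cc) := by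
              rw [h15]; ring
            rw [h2] at he
            linarith
          exact (K2 heq).2
        · rintro ⟨_, k, hk⟩
          have hBm : (44 * B (m+1) + 1 : ℕ) = 45 ^ (k+1) := by rw [hk]; exact Beq k
          have hBsucc : B (m+1) = B m + digProd m := B_succ m
          have hcast : 44 * ((B m : ℝ) + (digProd m : ℝ)) + 1 = (45:ℝ) ^ (k+1) := by
            have := congrArg (Nat.cast : ℕ → ℝ) hBm
            rw [hBsucc] at this
            push_cast at this
            linarith
          have hmr : (m:ℝ) + 1 = (((10:ℕ)^k : ℕ) : ℝ) := by
            have := congrArg (Nat.cast : ℕ → ℝ) hk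
            push_cast at this ⊢
            linarith
          rw [hlhs, h15, hmr, pow_ten_rpow k]
          rw [show (44 * (B m : ℝ) + 1 + 44 * (1:ℝ) * (digProd m : ℝ)) = 44 * ((B m : ℝ) + (digProd m : ℝ)) + 1 by ring, hcast]
          ring

lemma rhs45 (x : ℝ) (hx : 0 < x) : (45:ℝ) ^ (Real.logb 10 x + 1) = 45 * x ^ cc := by
  have h1 : (45:ℝ) = (10:ℝ) ^ cc := ten_rpow_cc.symm
  rw [h1, ← Real.rpow_mul (by norm_num : (0:ℝ) ≤ 10)]
  rw [mul_add, mul_one, Real.rpow_add (by norm_num : (0:ℝ) < 10), ten_rpow_cc,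
    mul_comm cc (Real.logb 10 x), Real.rpow_mul (by norm_num : (0:ℝ) ≤ 10),
    Real.rpow_logb (by norm_num) (by norm_num) hx]
  ring

/-- `a(n) ≤ (5/11)(45^(log₁₀((n+1)/5)+1) - 1)` for all `n ≥ 1`, with equality iff
`n = 5·10^k - 1` for some `k`. -/
theorem stmt6 (n : ℕ) (hn : 1 ≤ n) :
    (a n : ℝ) ≤ 5 / 11 * ((45 : ℝ) ^ (Real.logb 10 (((n : ℝ) + 1) / 5) + 1) - 1) ∧
    ((a n : ℝ) = 5 / 11 * ((45 : ℝ) ^ (Real.logb 10 (((n : ℝ) + 1) / 5) + 1) - 1) ↔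
      ∃ k : ℕ, n = 5 * 10 ^ k - 1) := by
  set m := n / 5 with hm
  set t := n % 5 with ht
  have hnt : n = 5*m + t := by omega
  have ht4 : t ≤ 4 := by omega
  have h1 : 1 ≤ 5*m + t := by omega
  have hx : ((n:ℝ) + 1)/5 = (m:ℝ) + ((t:ℝ)+1)/5 := by
    have : (n:ℝ) = 5*(m:ℝ) + (t:ℝ) := by exact_mod_cast congrArg (Nat.cast : ℕ → ℝ) hnt
    rw [this]; ring
  have hxpos : (0:ℝ) < ((n:ℝ) + 1)/5 := by positivity
  have h45 : (45 : ℝ) ^ (Real.logb 10 (((n : ℝ) + 1) / 5) + 1) = 45 * (((n:ℝ)+1)/5) ^ cc :=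
    rhs45 _ hxpos
  obtain ⟨C1, C2⟩ := core m t ht4 h1
  rw [← hnt] at C1 C2
  rw [← hx] at C1 C2
  constructor
  · rw [h45]
    linarith
  · rw [h45]
    have hiff : (a n : ℝ) = 5 / 11 * (45 * (((n:ℝ)+1)/5) ^ cc - 1) ↔
        11 * (a n : ℝ) + 5 = 225 * (((n:ℝ)+1)/5) ^ cc := by
      constructor <;> intro hh <;> linarith
    rw [hiff, C2]
    constructor
    · rintro ⟨h4, k, hk⟩
      refine ⟨k, ?_⟩
      have h10 : 1 ≤ 10^k := Nat.one_le_pow _ _ (by norm_num)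
      omega
    · rintro ⟨k, hk⟩
      have h10 : 1 ≤ 10^k := Nat.one_le_pow _ _ (by norm_num)
      constructor
      · omega
      · exact ⟨k, by omega⟩
end

section
/- For every odd n ≥ 1, c(n) ≤ (25/44)(45^{log₁₀(n)} - 1) + (5/11)(45^{log₁₀((n+2)/10)+1} - 1) + C(n), where C(n) is the product of the decimal digits of n and c(n) = Σ_{j=1}^{n} C(j). -/
/-- Sum of products of digits of the first `m` positive integers. -/
def c (m : ℕ) : ℕ := ∑ j ∈ Finset.Icc 1 m, digProd j




def T (n : ℕ) : ℕ := ∑ i ∈ Finset.range n, i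

lemma c_succ (n : ℕ) : c (n+1) = c n + digProd (n+1) := by
  unfold c
  rw [Finset.sum_Icc_succ_top (by omega)]

lemma digProd_mul10 (M d : ℕ) (hM : 1 ≤ M) (hd : d ≤ 9) :
    digProd (10*M+d) = d * digProd M := by
  unfold digProd
  rw [Nat.digits_def' (by norm_num : 1 < 10) (by omega)]
  have h1 : (10*M+d) % 10 = d := by omega
  have h2 : (10*M+d) / 10 = M := by omega
  rw [h1, h2, List.prod_cons]

lemma c9 : c 9 = 45 := by
  unfold c
  rw [show Finset.Icc 1 9 = {1,2,3,4,5,6,7,8,9} from rfl]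
  norm_num [digProd]

lemma cchain (m : ℕ) (j : ℕ) (hj : j ≤ 9) :
    c (10*(m+1)+j) = c (10*m+9) + (T (j+1)) * digProd (m+1) := by
  induction j with
  | zero =>
    have e1 : 10*(m+1) = (10*m+9)+1 := by ring
    have e2 : digProd (10*(m+1)+0) = 0 * digProd (m+1) :=
      digProd_mul10 (m+1) 0 (by omega) (by omega)
    have := c_succ (10*m+9)
    rw [← e1] at this
    simp only [Nat.add_zero] at e2 ⊢
    rw [this, e2]
    simp [T]
  | succ j ih =>
    have hj9 : j ≤ 9 := by omega
    have e1 : 10*(m+1)+(j+1) = (10*(m+1)+j)+1 := by ring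
    have e2 : digProd (10*(m+1)+(j+1)) = (j+1) * digProd (m+1) :=
      digProd_mul10 (m+1) (j+1) (by omega) (by omega)
    have e3 := c_succ (10*(m+1)+j)
    rw [← e1] at e3
    rw [e3, e2, ih hj9]
    have : T (j+1+1) = T (j+1) + (j+1) := by
      unfold T
      rw [Finset.sum_range_succ]
    rw [this]
    ring

lemma base9 (m : ℕ) : c (10*m+9) = 45 + 45 * c m := by
  induction m with
  | zero => simpa [show c 0 = 0 from rfl] using c9
  | succ m ih =>
    have h := cchain m 9 (le_refl 9)
    have e : 10*(m+1)+9 = 10*m+19 := by ring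
    have hT : T 10 = 45 := by decide
    rw [h, ih, hT, c_succ m]
    ring

lemma crec (m d : ℕ) (hd : d ≤ 9) :
    c (10*(m+1)+d) = 45 + 45 * c m + (T (d+1)) * digProd (m+1) := by
  rw [cchain m d hd, base9 m]


noncomputable def ff (x : ℝ) : ℝ := (45:ℝ) ^ (Real.logb 10 x)

noncomputable def al : ℝ := Real.logb 10 45

lemma ff_pos (x : ℝ) : 0 < ff x := Real.rpow_pos_of_pos (by norm_num) _

lemma ff_one : ff 1 = 1 := by simp [ff]

lemma al_ge_one : 1 ≤ al := by
  rw [al, Real.le_logb_iff_rpow_le (by norm_num) (by norm_num)]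
  norm_num

lemma al_le_two : al ≤ 2 := by
  rw [al, Real.logb_le_iff_le_rpow (by norm_num) (by norm_num)]
  norm_num

lemma ff_eq_rpow {x : ℝ} (hx : 0 < x) : ff x = x ^ al := by
  rw [ff, al, Real.rpow_def_of_pos (by norm_num : (0:ℝ) < 45),
    Real.rpow_def_of_pos hx, Real.logb, Real.logb]
  congr 1
  ring

lemma ff_mul10 {x : ℝ} (hx : 0 < x) : ff (10*x) = 45 * ff x := by
  rw [ff, ff, Real.logb_mul (by norm_num) (ne_of_gt hx),
    Real.logb_self_eq_one (by norm_num), Real.rpow_add (by norm_num), Real.rpow_one]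

lemma ff_mono {x y : ℝ} (hx : 0 < x) (hxy : x ≤ y) : ff x ≤ ff y :=
  Real.rpow_le_rpow_of_exponent_le (by norm_num)
    (Real.logb_le_logb_of_le (by norm_num) hx hxy)

-- Bernoulli: ff (x*(1+s)) >= ff x * (1 + al * s)
lemma ff_bern {x s : ℝ} (hx : 0 < x) (hs : -1 ≤ s) :
    ff x * (1 + al * s) ≤ ff (x*(1+s)) := by
  have h1 : 1 + al * s ≤ (1+s) ^ al := one_add_mul_self_le_rpow_one_add hs al_ge_one
  rcases eq_or_lt_of_le hs with h | h
  · have hz : x*(1+s) = 0 := by rw [← h]; ring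
    rw [hz]
    have hff0 : ff 0 = 1 := by simp [ff]
    have h3 : 1 + al * s ≤ 0 := by
      rw [← h]; have := al_ge_one; nlinarith
    have := ff_pos x
    rw [hff0]
    nlinarith
  · have h1s : 0 < 1 + s := by linarith
    have h2 : ff (x*(1+s)) = ff x * (1+s) ^ al := by
      rw [ff_eq_rpow hx, ff_eq_rpow (by positivity : (0:ℝ) < x*(1+s)),
        Real.mul_rpow (le_of_lt hx) (le_of_lt h1s)]
    rw [h2]
    have := ff_pos x
    nlinarith
-- ratio: ff y * x^2 <= ff x * y^2 for 1 <= x <= y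
lemma ff_ratio_sq {x y : ℝ} (hx : 1 ≤ x) (hxy : x ≤ y) : ff y * x^2 ≤ ff x * y^2 := by
  have hx0 : (0:ℝ) < x := by linarith
  have hy0 : (0:ℝ) < y := by linarith
  have h1 : (y/x) ^ al ≤ (y/x) ^ (2:ℝ) :=
    Real.rpow_le_rpow_of_exponent_le (by rw [le_div_iff₀ hx0]; linarith) al_le_two
  rw [Real.rpow_two, Real.div_rpow (le_of_lt hy0) (le_of_lt hx0)] at h1
  rw [← ff_eq_rpow hy0, ← ff_eq_rpow hx0] at h1
  rw [div_le_iff₀ (ff_pos x)] at h1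
  have h2 : ff y * x^2 ≤ ((y/x)^2 * ff x) * x^2 :=
    mul_le_mul_of_nonneg_right h1 (sq_nonneg x)
  have h3 : ((y/x)^2 * ff x) * x^2 = ff x * y^2 := by
    field_simp
  linarith [h2, h3.le, h3.ge]


-- certificate: lower bound  a/b ≤ ff N
lemma cert_lb (N a b p q : ℕ) (hb : 0 < b) (hq : 0 < q)
    (h1 : 10^p ≤ N^q) (h2 : a^q ≤ 45^p * b^q) : (a:ℝ)/b ≤ ff N := by
  have hN : 1 ≤ N := by
    rcases Nat.eq_zero_or_pos N with h | h
    · exfalso; subst h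
      have : (0:ℕ) < 10^p := by positivity
      have h0 : (0:ℕ)^q = 0 := zero_pow hq.ne'
      omega
    · exact h
  have hNR : (0:ℝ) < N := by exact_mod_cast hN
  have e1 : ((p:ℝ)/q) ≤ Real.logb 10 N := by
    rw [Real.le_logb_iff_rpow_le (by norm_num) hNR]
    have key : ((10:ℝ)^((p:ℝ)/q))^q ≤ (N:ℝ)^q := by
      rw [← Real.rpow_natCast ((10:ℝ)^((p:ℝ)/q)) q, ← Real.rpow_mul (by norm_num),
        div_mul_cancel₀ _ (by exact_mod_cast hq.ne' : (q:ℝ) ≠ 0), Real.rpow_natCast]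
      exact_mod_cast h1
    exact le_of_pow_le_pow_left₀ hq.ne' (le_of_lt hNR) key
  have e2 : (a:ℝ)/b ≤ (45:ℝ)^((p:ℝ)/q) := by
    have hbR : (0:ℝ) < b := by exact_mod_cast hb
    have key : ((a:ℝ)/b)^q ≤ ((45:ℝ)^((p:ℝ)/q))^q := by
      rw [← Real.rpow_natCast ((45:ℝ)^((p:ℝ)/q)) q, ← Real.rpow_mul (by norm_num),
        div_mul_cancel₀ _ (by exact_mod_cast hq.ne' : (q:ℝ) ≠ 0), Real.rpow_natCast,
        div_pow]
      rw [div_le_iff₀ (by positivity)]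
      exact_mod_cast h2
    exact le_of_pow_le_pow_left₀ hq.ne' (by positivity) key
  exact e2.trans (Real.rpow_le_rpow_of_exponent_le (by norm_num) e1)

-- certificate: upper bound ff N ≤ a/b
lemma cert_ub (N a b p q : ℕ) (hN : 0 < N) (hb : 0 < b) (hq : 0 < q)
    (h1 : N^q ≤ 10^p) (h2 : 45^p * b^q ≤ a^q) : ff N ≤ (a:ℝ)/b := by
  have hNR : (0:ℝ) < N := by exact_mod_cast hN
  have e1 : Real.logb 10 N ≤ ((p:ℝ)/q) := by
    rw [Real.logb_le_iff_le_rpow (by norm_num) hNR]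
    have key : (N:ℝ)^q ≤ ((10:ℝ)^((p:ℝ)/q))^q := by
      rw [← Real.rpow_natCast ((10:ℝ)^((p:ℝ)/q)) q, ← Real.rpow_mul (by norm_num),
        div_mul_cancel₀ _ (by exact_mod_cast hq.ne' : (q:ℝ) ≠ 0), Real.rpow_natCast]
      exact_mod_cast h1
    exact le_of_pow_le_pow_left₀ hq.ne' (by positivity) key
  have e2 : (45:ℝ)^((p:ℝ)/q) ≤ (a:ℝ)/b := by
    have hbR : (0:ℝ) < b := by exact_mod_cast hb
    have key : ((45:ℝ)^((p:ℝ)/q))^q ≤ ((a:ℝ)/b)^q := by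
      rw [← Real.rpow_natCast ((45:ℝ)^((p:ℝ)/q)) q, ← Real.rpow_mul (by norm_num),
        div_mul_cancel₀ _ (by exact_mod_cast hq.ne' : (q:ℝ) ≠ 0), Real.rpow_natCast,
        div_pow]
      rw [le_div_iff₀ (by positivity)]
      exact_mod_cast h2
    exact le_of_pow_le_pow_left₀ hq.ne' (by positivity) key
  exact (Real.rpow_le_rpow_of_exponent_le (by norm_num) e1).trans e2

lemma ffub2 : ff 2 ≤ (575:ℝ)/181 := by
  have h := cert_ub 2 575 181 10 33 (by norm_num) (by norm_num) (by norm_num) (by norm_num) (by norm_num)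
  simpa using h

lemma ffub3 : ff 3 ≤ (975:ℝ)/157 := by
  have h := cert_ub 3 975 157 11 23 (by norm_num) (by norm_num) (by norm_num) (by norm_num) (by norm_num)
  simpa using h

lemma ffub4 : ff 4 ≤ (1259:ℝ)/126 := by
  have h := cert_ub 4 1259 126 26 43 (by norm_num) (by norm_num) (by norm_num) (by norm_num) (by norm_num)
  simpa using h

lemma ffub5 : ff 5 ≤ (289:ℝ)/20 := by
  have h := cert_ub 5 289 20 7 10 (by norm_num) (by norm_num) (by norm_num) (by norm_num) (by norm_num)
  simpa using h

lemma ffub6 : ff 6 ≤ (3848:ℝ)/197 := by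
  have h := cert_ub 6 3848 197 32 41 (by norm_num) (by norm_num) (by norm_num) (by norm_num) (by norm_num)
  simpa using h

lemma ffub7 : ff 7 ≤ (3604:ℝ)/143 := by
  have h := cert_ub 7 3604 143 11 13 (by norm_num) (by norm_num) (by norm_num) (by norm_num) (by norm_num)
  simpa using h

lemma ffub8 : ff 8 ≤ (220:ℝ)/7 := by
  have h := cert_ub 8 220 7 19 21 (by norm_num) (by norm_num) (by norm_num) (by norm_num) (by norm_num)
  simpa using h

lemma fflb16 : (32805:ℝ)/374 ≤ ff 16 := by
  have h := cert_lb 16 32805 374 6 5 (by norm_num) (by norm_num) (by norm_num) (by norm_num)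
  simpa using h

lemma fflb17 : (10238:ℝ)/103 ≤ ff 17 := by
  have h := cert_lb 17 10238 103 11 9 (by norm_num) (by norm_num) (by norm_num) (by norm_num)
  simpa using h

lemma fflb18 : (86864:ℝ)/773 ≤ ff 18 := by
  have h := cert_lb 18 86864 773 5 4 (by norm_num) (by norm_num) (by norm_num) (by norm_num)
  simpa using h

lemma fflb19 : (27986:ℝ)/221 ≤ ff 19 := by
  have h := cert_lb 19 27986 221 14 11 (by norm_num) (by norm_num) (by norm_num) (by norm_num)
  simpa using h

lemma fflb28 : (142590:ℝ)/601 ≤ ff 28 := by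
  have h := cert_lb 28 142590 601 13 9 (by norm_num) (by norm_num) (by norm_num) (by norm_num)
  simpa using h

lemma fflb38 : (378311:ℝ)/953 ≤ ff 38 := by
  have h := cert_lb 38 378311 953 30 19 (by norm_num) (by norm_num) (by norm_num) (by norm_num)
  simpa using h

lemma fflb29 : (251875:ℝ)/981 ≤ ff 29 := by
  have h := cert_lb 29 251875 981 19 13 (by norm_num) (by norm_num) (by norm_num) (by norm_num)
  simpa using h

lemma fflb39 : (140213:ℝ)/333 ≤ ff 39 := by
  have h := cert_lb 39 140213 333 27 17 (by norm_num) (by norm_num) (by norm_num) (by norm_num)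
  simpa using h

lemma fflb49 : (276622:ℝ)/449 ≤ ff 49 := by
  have h := cert_lb 49 276622 449 27 16 (by norm_num) (by norm_num) (by norm_num) (by norm_num)
  simpa using h

lemma fflb59 : (376897:ℝ)/449 ≤ ff 59 := by
  have h := cert_lb 59 376897 449 23 13 (by norm_num) (by norm_num) (by norm_num) (by norm_num)
  simpa using h

lemma fflb69 : (1088161:ℝ)/999 ≤ ff 69 := by
  have h := cert_lb 69 1088161 999 57 31 (by norm_num) (by norm_num) (by norm_num) (by norm_num)
  simpa using h

lemma fflb79 : (1319150:ℝ)/967 ≤ ff 79 := by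
  have h := cert_lb 79 1319150 967 55 29 (by norm_num) (by norm_num) (by norm_num) (by norm_num)
  simpa using h

lemma star_c_1_6 : (15:ℝ) * (ff 2 - ff 1) ≤ ff 16 - 45 * ff 1 := by
  have h1 := fflb16
  have h2 := ffub2
  have h3 : ff 1 = 1 := ff_one
  linarith

lemma star_c_1_7 : (21:ℝ) * (ff 2 - ff 1) ≤ ff 17 - 45 * ff 1 := by
  have h1 := fflb17
  have h2 := ffub2
  have h3 : ff 1 = 1 := ff_one
  linarith

lemma star_c_1_8 : (28:ℝ) * (ff 2 - ff 1) ≤ ff 18 - 45 * ff 1 := by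
  have h1 := fflb18
  have h2 := ffub2
  have h3 : ff 1 = 1 := ff_one
  linarith

lemma star_c_1_9 : (36:ℝ) * (ff 2 - ff 1) ≤ ff 19 - 45 * ff 1 := by
  have h1 := fflb19
  have h2 := ffub2
  have h3 : ff 1 = 1 := ff_one
  linarith

lemma star_c_2_8 : (28:ℝ) * (ff 3 - ff 2) ≤ ff 28 - 45 * ff 2 := by
  have h1 := fflb28
  have h2 := ffub3
  have h3 := ffub2
  linarith

lemma star_c_3_8 : (28:ℝ) * (ff 4 - ff 3) ≤ ff 38 - 45 * ff 3 := by
  have h1 := fflb38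
  have h2 := ffub4
  have h3 := ffub3
  linarith

lemma star_c_2_9 : (36:ℝ) * (ff 3 - ff 2) ≤ ff 29 - 45 * ff 2 := by
  have h1 := fflb29
  have h2 := ffub3
  have h3 := ffub2
  linarith

lemma star_c_3_9 : (36:ℝ) * (ff 4 - ff 3) ≤ ff 39 - 45 * ff 3 := by
  have h1 := fflb39
  have h2 := ffub4
  have h3 := ffub3
  linarith

lemma star_c_4_9 : (36:ℝ) * (ff 5 - ff 4) ≤ ff 49 - 45 * ff 4 := by
  have h1 := fflb49
  have h2 := ffub5
  have h3 := ffub4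
  linarith

lemma star_c_5_9 : (36:ℝ) * (ff 6 - ff 5) ≤ ff 59 - 45 * ff 5 := by
  have h1 := fflb59
  have h2 := ffub6
  have h3 := ffub5
  linarith

lemma star_c_6_9 : (36:ℝ) * (ff 7 - ff 6) ≤ ff 69 - 45 * ff 6 := by
  have h1 := fflb69
  have h2 := ffub7
  have h3 := ffub6
  linarith

lemma star_c_7_9 : (36:ℝ) * (ff 8 - ff 7) ≤ ff 79 - 45 * ff 7 := by
  have h1 := fflb79
  have h2 := ffub8
  have h3 := ffub7
  linarith

lemma star_gen (M e : ℕ) (hM : 1 ≤ M) (he1 : 1 ≤ e) (he2 : e ≤ 9)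
    (hcond : (e-1)*(M+1) ≤ 9*M) :
    (T e : ℝ) * (ff (M+1) - ff M) ≤ ff (10*M + e) - 45 * ff M := by
  have hm1 : (1:ℝ) ≤ (M:ℝ) := by exact_mod_cast hM
  set m : ℝ := (M:ℝ) with hmdef
  have hm0 : 0 < m := by linarith
  have he1R : (1:ℝ) ≤ (e:ℝ) := by exact_mod_cast he1
  set e' : ℝ := (e:ℝ) with hedef
  -- A : (ff(m+1) - ff m) * (m+1) ≤ al * ff (m+1)
  have hA : (ff (m+1) - ff m) * (m+1) ≤ al * ff (m+1) := by
    have hb := ff_bern (x := m+1) (s := -(1/(m+1))) (by linarith) (by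
      rw [neg_le, neg_neg]
      rw [div_le_one (by linarith)]; linarith)
    have harg : (m+1) * (1 + -(1/(m+1))) = m := by field_simp; ring
    rw [harg] at hb
    have hexp : ff (m+1) * (1 + al * -(1/(m+1))) * (m+1) = ff (m+1) * (m+1) - al * ff (m+1) := by
      field_simp; ring
    nlinarith [ff_pos (m+1), ff_pos m]
  -- B : 45 * ff m * al * e' ≤ (ff (10*m+e') - 45 * ff m) * (10*m)
  have hB : 45 * ff m * al * e' ≤ (ff (10*m+e') - 45 * ff m) * (10*m) := by
    have hb := ff_bern (x := 10*m) (s := e'/(10*m)) (by linarith) (by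
      have : (0:ℝ) ≤ e'/(10*m) := by positivity
      linarith)
    have harg : (10*m) * (1 + e'/(10*m)) = 10*m + e' := by field_simp
    rw [harg, ff_mul10 hm0] at hb
    have hexp : 45 * ff m * (1 + al * (e'/(10*m))) * (10*m)
        = 45*ff m*(10*m) + 45*ff m*al*e' := by field_simp
    nlinarith [ff_pos m]
  have hC : ff (m+1) * m^2 ≤ ff m * (m+1)^2 := ff_ratio_sq hm1 (by linarith)
  have h2T : (T e : ℝ) * 2 = e' * (e' - 1) := by
    have := Finset.sum_range_id_mul_two e
    have hcast : ((T e * 2 : ℕ) : ℝ) = ((e * (e-1) : ℕ) : ℝ) := by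
      exact_mod_cast congrArg (Nat.cast (R := ℝ)) (by simpa [T] using this)
    push_cast [Nat.cast_sub he1] at hcast
    convert hcast using 1 <;> push_cast <;> ring
  have hnum : (e' - 1)*(m+1) ≤ 9*m := by
    have : ((e-1)*(M+1) : ℕ) ≤ ((9*M : ℕ)) := hcond
    have hc : ((e:ℝ)-1) = ((e-1 : ℕ) : ℝ) := by
      push_cast [Nat.cast_sub he1]; ring
    rw [hedef, hc, hmdef]
    exact_mod_cast this
  -- numeric: 10 * T e * (m+1) ≤ 45 * e' * m
  have hTe0 : (0:ℝ) ≤ (T e : ℝ) := by positivity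
  have hkey : 10 * (T e : ℝ) * (m+1) ≤ 45 * e' * m := by
    nlinarith [mul_le_mul_of_nonneg_left hnum (by linarith : (0:ℝ) ≤ 5*e')]
  -- combine
  have hffm1 : 0 < ff (m+1) := ff_pos _
  have hffm : 0 < ff m := ff_pos _
  have step1 : (T e : ℝ) * ff (m+1) * (10*m) * m ≤ 45 * e' * ff m * (m+1) * m := by
    have c1 : 10 * (T e : ℝ) * (ff (m+1) * m^2) ≤ 10 * (T e : ℝ) * (ff m * (m+1)^2) := by
      apply mul_le_mul_of_nonneg_left hC (by linarith)
    nlinarith [mul_le_mul_of_nonneg_right hkey (le_of_lt (mul_pos hffm (by linarith : (0:ℝ) < m+1)))]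
  have hfinal : (T e : ℝ) * (ff (m+1) - ff m) * (10*m*(m+1)*m) ≤
      (ff (10*m+e') - 45*ff m) * (10*m*(m+1)*m) := by
    have s1 : (T e : ℝ) * ((ff (m+1) - ff m) * (m+1)) * (10*m*m) ≤
        (T e : ℝ) * (al * ff (m+1)) * (10*m*m) := by
      apply mul_le_mul_of_nonneg_right (mul_le_mul_of_nonneg_left hA hTe0)
      positivity
    have s2 : al * ((T e:ℝ) * ff (m+1) * (10*m) * m) ≤ al * (45 * e' * ff m * (m+1) * m) :=
      mul_le_mul_of_nonneg_left step1 (by linarith [al_ge_one])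
    have s3 : (45 * ff m * al * e') * ((m+1)*m) ≤ ((ff (10*m+e') - 45 * ff m) * (10*m)) * ((m+1)*m) := by
      apply mul_le_mul_of_nonneg_right hB
      positivity
    nlinarith [s1, s2, s3]
  have hcast10 : ((10*M + e : ℕ) : ℝ) = 10*m + e' := by push_cast; ring
  have hred : (T e : ℝ) * (ff (m+1) - ff m) ≤ ff (10*m+e') - 45 * ff m :=
    le_of_mul_le_mul_right hfinal (by positivity : (0:ℝ) < 10*m*(m+1)*m)

  exact hred

lemma star_ten (M : ℕ) (hM : 1 ≤ M) :
    (T 10 : ℝ) * (ff (M+1) - ff M) = ff (10*M + 10) - 45 * ff M := by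
  have hM0 : (0:ℝ) < (M:ℝ) + 1 := by positivity
  have harg : (10:ℝ)*M + 10 = 10*((M:ℝ)+1) := by ring
  have hT : T 10 = 45 := by decide
  rw [harg, ff_mul10 hM0, hT]
  push_cast
  ring

lemma star (M e : ℕ) (hM : 1 ≤ M) (he1 : 1 ≤ e) (he2 : e ≤ 10) :
    (T e : ℝ) * (ff (M+1) - ff M) ≤ ff (10*M + e) - 45 * ff M := by
  by_cases h10 : e = 10
  · subst h10
    exact le_of_eq (star_ten M hM)
  · have he9 : e ≤ 9 := by omega
    by_cases hcond : (e-1)*(M+1) ≤ 9*M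
    · exact star_gen M e hM he1 he9 hcond
    · have hMle : M ≤ 7 := by
        by_contra hM8
        have h8 : (e-1)*(M+1) ≤ 8*(M+1) := Nat.mul_le_mul_right _ (by omega)
        omega
      have he6 : 6 ≤ e := by
        by_contra he5
        have h5 : (e-1)*(M+1) ≤ 4*(M+1) := Nat.mul_le_mul_right _ (by omega)
        omega
      interval_cases M <;> interval_cases e <;>
        (try (exfalso; omega)) <;>
        (simp only [T, Finset.sum_range_succ, Finset.sum_range_zero]; push_cast; norm_num;
         linarith [star_c_1_6, star_c_1_7, star_c_1_8, star_c_1_9, star_c_2_8, star_c_3_8,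
           star_c_2_9, star_c_3_9, star_c_4_9, star_c_5_9, star_c_6_9, star_c_7_9])

lemma cval1 : c 1 = 1 := by
  unfold c
  rw [show Finset.Icc 1 1 = {1} from rfl]
  norm_num [digProd]

lemma cval2 : c 2 = 3 := by
  unfold c
  rw [show Finset.Icc 1 2 = {1,2} from rfl]
  norm_num [digProd]

lemma cval3 : c 3 = 6 := by
  unfold c
  rw [show Finset.Icc 1 3 = {1,2,3} from rfl]
  norm_num [digProd]

lemma cval4 : c 4 = 10 := by
  unfold c
  rw [show Finset.Icc 1 4 = {1,2,3,4} from rfl]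
  norm_num [digProd]

lemma cval5 : c 5 = 15 := by
  unfold c
  rw [show Finset.Icc 1 5 = {1,2,3,4,5} from rfl]
  norm_num [digProd]

lemma cval6 : c 6 = 21 := by
  unfold c
  rw [show Finset.Icc 1 6 = {1,2,3,4,5,6} from rfl]
  norm_num [digProd]

lemma cval7 : c 7 = 28 := by
  unfold c
  rw [show Finset.Icc 1 7 = {1,2,3,4,5,6,7} from rfl]
  norm_num [digProd]

lemma cval8 : c 8 = 36 := by
  unfold c
  rw [show Finset.Icc 1 8 = {1,2,3,4,5,6,7,8} from rfl]
  norm_num [digProd]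

lemma ff_ten : ff 10 = 45 := by
  rw [ff, Real.logb_self_eq_one (by norm_num), Real.rpow_one]

lemma T_le (d : ℕ) (hd : d ≤ 9) : T (d+1) ≤ 45 := by
  interval_cases d <;> decide

lemma diamond (N : ℕ) : (c N : ℝ) ≤ 45/44 * (ff ((N:ℝ)+1) - 1) := by
  induction N using Nat.strong_induction_on with
  | _ N IH =>
  rcases lt_or_ge N 10 with h | h
  · interval_cases N

    · -- N = 0
      have h0 : c 0 = 0 := rfl
      rw [h0, show ((0:ℕ):ℝ) + 1 = (1:ℝ) by norm_num, ff_one]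
      norm_num
    · -- N = 1
      have hlb := cert_lb 2 88 35 1 4 (by norm_num) (by norm_num) (by norm_num) (by norm_num)
      rw [cval1]
      have e1 : ((1:ℕ):ℝ) + 1 = ((2:ℕ):ℝ) := by norm_num
      rw [e1]
      norm_num at hlb ⊢
      try linarith
    · -- N = 2
      have hlb := cert_lb 3 193 39 3 7 (by norm_num) (by norm_num) (by norm_num) (by norm_num)
      rw [cval2]
      have e1 : ((2:ℕ):ℝ) + 1 = ((3:ℕ):ℝ) := by norm_num
      rw [e1]
      norm_num at hlb ⊢
      try linarith
    · -- N = 3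
      have hlb := cert_lb 4 782 95 3 5 (by norm_num) (by norm_num) (by norm_num) (by norm_num)
      rw [cval3]
      have e1 : ((3:ℕ):ℝ) + 1 = ((4:ℕ):ℝ) := by norm_num
      rw [e1]
      norm_num at hlb ⊢
      try linarith
    · -- N = 4
      have hlb := cert_lb 5 752 61 2 3 (by norm_num) (by norm_num) (by norm_num) (by norm_num)
      rw [cval4]
      have e1 : ((4:ℕ):ℝ) + 1 = ((5:ℕ):ℝ) := by norm_num
      rw [e1]
      norm_num at hlb ⊢
      try linarith
    · -- N = 5
      have hlb := cert_lb 6 1050 61 3 4 (by norm_num) (by norm_num) (by norm_num) (by norm_num)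
      rw [cval5]
      have e1 : ((5:ℕ):ℝ) + 1 = ((6:ℕ):ℝ) := by norm_num
      rw [e1]
      norm_num at hlb ⊢
      try linarith
    · -- N = 6
      have hlb := cert_lb 7 1921 84 5 6 (by norm_num) (by norm_num) (by norm_num) (by norm_num)
      rw [cval6]
      have e1 : ((6:ℕ):ℝ) + 1 = ((7:ℕ):ℝ) := by norm_num
      rw [e1]
      norm_num at hlb ⊢
      try linarith
    · -- N = 7
      have hlb := cert_lb 8 1669 57 8 9 (by norm_num) (by norm_num) (by norm_num) (by norm_num)
      rw [cval7]
      have e1 : ((7:ℕ):ℝ) + 1 = ((8:ℕ):ℝ) := by norm_num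
      rw [e1]
      norm_num at hlb ⊢
      try linarith
    · -- N = 8
      have hlb := cert_lb 9 3425 94 18 19 (by norm_num) (by norm_num) (by norm_num) (by norm_num)
      rw [cval8]
      have e1 : ((8:ℕ):ℝ) + 1 = ((9:ℕ):ℝ) := by norm_num
      rw [e1]
      norm_num at hlb ⊢
      try linarith
    · -- N = 9
      rw [c9]
      have e1 : ((9:ℕ):ℝ) + 1 = 10 := by norm_num
      rw [e1, ff_ten]
      norm_num

  · -- N ≥ 10
    obtain ⟨m, d, hd, rfl⟩ : ∃ m d, d ≤ 9 ∧ N = 10*(m+1)+d :=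
      ⟨N/10 - 1, N % 10, by omega, by omega⟩
    have hrec := crec m d hd
    have IH1 := IH m (by omega)
    have IH2 := IH (m+1) (by omega)
    have hstar := star (m+1) (d+1) (by omega) (by omega) (by omega)
    have hdig : (digProd (m+1) : ℝ) = (c (m+1) : ℝ) - (c m : ℝ) := by
      have := c_succ m
      push_cast [this]
      ring
    have hT0 : (0:ℝ) ≤ (T (d+1) : ℝ) := by positivity
    have hT45 : (T (d+1) : ℝ) ≤ 45 := by exact_mod_cast T_le d hd
    have hcN : ((c (10*(m+1)+d) : ℕ) : ℝ) = 45 + 45 * (c m : ℝ) + (T (d+1) : ℝ) * ((c (m+1) : ℝ) - (c m : ℝ)) := by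
      rw [hrec]
      push_cast
      rw [hdig]
      try ring
    have harg1 : ((m:ℝ)+1) + 1 = ((m+1:ℕ):ℝ) + 1 := by push_cast; ring
    have harg2 : (10:ℝ)*((m+1:ℕ):ℝ) + ((d+1:ℕ):ℝ) = ((10*(m+1)+d : ℕ):ℝ) + 1 := by push_cast; ring
    rw [harg2] at hstar
    set X := ff (((10*(m+1)+d : ℕ):ℝ) + 1) with hX
    set A := ff (((m+1:ℕ)):ℝ) with hA
    set B := ff (((m+1:ℕ):ℝ) + 1) with hB
    rw [hcN]
    have IH2' : (c (m+1) : ℝ) ≤ 45/44 * (B - 1) := IH2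
    have IH1' : (c m : ℝ) ≤ 45/44 * (A - 1) := by
      have : ((m:ℝ)+1) = ((m+1:ℕ):ℝ) := by push_cast; ring
      rw [this] at IH1
      exact IH1
    have hmono : (c m : ℝ) ≤ (c (m+1) : ℝ) := by
      have := c_succ m
      have h2 : c m ≤ c (m+1) := by omega
      exact_mod_cast h2
    nlinarith [mul_nonneg (by linarith : (0:ℝ) ≤ 45 - (T (d+1):ℝ)) (by linarith : (0:ℝ) ≤ 45/44*(A-1) - (c m : ℝ)),
      mul_nonneg hT0 (by linarith : (0:ℝ) ≤ 45/44*(B-1) - (c (m+1) : ℝ)), hstar]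

/-- Upper bound for `c(n)` at odd `n ≥ 1`, with the extra digit-product term `C(n)`. -/
theorem stmt16 (n : ℕ) (hn : 1 ≤ n) (hodd : Odd n) :
    (c n : ℝ) ≤ 25 / 44 * ((45 : ℝ) ^ (Real.logb 10 (n : ℝ)) - 1)
      + 5 / 11 * ((45 : ℝ) ^ (Real.logb 10 (((n : ℝ) + 2) / 10) + 1) - 1)
      + (digProd n : ℝ) := by
  obtain ⟨k, rfl⟩ : ∃ k, n = k+1 := ⟨n-1, by omega⟩
  have hd := diamond k
  have hcs : ((c (k+1) : ℕ) : ℝ) = (c k : ℝ) + (digProd (k+1) : ℝ) := by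
    rw [c_succ]; push_cast; ring
  have hpos : (0:ℝ) < ((k+1:ℕ):ℝ) := by positivity
  have hmono : ff (((k+1:ℕ)):ℝ) ≤ ff (((k+1:ℕ):ℝ) + 2) := ff_mono hpos (by linarith)
  have hlog : Real.logb 10 ((((k+1:ℕ):ℝ) + 2) / 10) + 1 = Real.logb 10 (((k+1:ℕ):ℝ) + 2) := by
    rw [Real.logb_div (by positivity) (by norm_num), Real.logb_self_eq_one (by norm_num)]
    ring
  rw [hcs, hlog]
  have hff1 : (45:ℝ) ^ Real.logb 10 (((k+1:ℕ)):ℝ) = ff ((k+1:ℕ):ℝ) := rfl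
  have hff2 : (45:ℝ) ^ Real.logb 10 ((((k+1:ℕ)):ℝ) + 2) = ff (((k+1:ℕ):ℝ) + 2) := rfl
  rw [hff1, hff2]
  have hd' : (c k : ℝ) ≤ 45/44 * (ff (((k+1:ℕ)):ℝ) - 1) := by
    have : ((k:ℝ)+1) = ((k+1:ℕ):ℝ) := by push_cast; ring
    rw [this] at hd
    exact hd
  linarith
end
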